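/- Let A be a unital C*-algebra and let a, b ∈ A satisfy σ(a·x) = σ(b·x) for all x ∈ A. If a is self-adjoint (a = a*), then a·b = b·a. -/

import Mathlib

/-! Auxiliary partition-of-unity ("hat") functions. -/

noncomputable def hatFn (δ : ℝ) (j : ℤ) (s : ℝ) : ℝ := max 0 (1 - |s / δ - j|)

lemma hat_cont (δ : ℝ) (j : ℤ) : Continuous (hatFn δ j) := by
  unfold hatFn; fun_prop

lemma hat_nonneg (δ : ℝ) (j : ℤ) (s : ℝ) : 0 ≤ hatFn δ j s := le_max_left _ _

lemma hat_le_one (δ : ℝ) (j : ℤ) (s : ℝ) : hatFn δ j s ≤ 1 := by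
  unfold hatFn
  apply max_le (by norm_num)
  have := abs_nonneg (s / δ - j)
  linarith

lemma hat_ne_zero {δ : ℝ} (hδ : 0 < δ) {j : ℤ} {s : ℝ} (hne : hatFn δ j s ≠ 0) :
    |s - δ * j| < δ := by
  unfold hatFn at hne
  have h1 : 0 < 1 - |s / δ - j| := by
    by_contra hc
    push_neg at hc
    exact hne (max_eq_left (by linarith))
  have h2 : |s / δ - j| < 1 := by linarith
  have h3 : s - δ * j = δ * (s / δ - j) := by field_simp
  rw [h3, abs_mul, abs_of_pos hδ]
  nlinarith

lemma hat_disj {δ : ℝ} (hδ : 0 < δ) {j k : ℤ} (hjk : 2 ≤ |j - k|) (s : ℝ) :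
    hatFn δ j s = 0 ∨ hatFn δ k s = 0 := by
  by_contra hc
  push_neg at hc
  have h1 := hat_ne_zero hδ hc.1
  have h2 := hat_ne_zero hδ hc.2
  have h3 : |(j : ℝ) - k| < 2 := by
    have heq : δ * |(j:ℝ) - k| = |(δ * j) - δ * k| := by
      rw [show (δ * j) - δ * k = δ * ((j:ℝ) - k) by ring, abs_mul, abs_of_pos hδ]
    have h4 : |(δ * j) - (δ * k)| ≤ |δ * j - s| + |s - δ * k| := abs_sub_le _ _ _
    rw [abs_sub_comm (δ * (j:ℝ)) s] at h4
    nlinarith [abs_nonneg ((j:ℝ) - k)]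
  have h5 : ((|j - k| : ℤ) : ℝ) < 2 := by push_cast [Int.cast_abs]; exact h3
  have h6 : (|j - k| : ℤ) < 2 := by exact_mod_cast h5
  omega

lemma hat_sum {δ : ℝ} (hδ : 0 < δ) {M s : ℝ} (hs : |s| ≤ M) :
    ∑ j ∈ Finset.Icc (-(⌈M / δ⌉ + 1)) (⌈M / δ⌉ + 1), hatFn δ j s = 1 := by
  set N : ℤ := ⌈M / δ⌉ + 1 with hN
  set u : ℝ := s / δ with hu
  set m : ℤ := ⌊u⌋ with hm
  have hM : 0 ≤ M := le_trans (abs_nonneg s) hs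
  have habs := abs_le.mp hs
  have hu1 : u ≤ M / δ := by rw [hu]; gcongr; exact habs.2
  have hu2 : -(M / δ) ≤ u := by
    rw [hu, show -(M/δ) = (-M)/δ by ring]; gcongr; exact habs.1
  have hum : (m : ℝ) ≤ u := Int.floor_le u
  have hum2 : u < m + 1 := Int.lt_floor_add_one u
  have hmlb : -N ≤ m := by
    have h2 : ⌊-(M/δ)⌋ ≤ m := Int.floor_le_floor hu2
    rw [Int.floor_neg] at h2
    omega
  have hmub : m + 1 ≤ N := by
    have h2 : m ≤ ⌊M/δ⌋ := Int.floor_le_floor hu1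
    have h3 : ⌊M/δ⌋ ≤ ⌈M/δ⌉ := Int.floor_le_ceil _
    omega
  have hsub : ({m, m+1} : Finset ℤ) ⊆ Finset.Icc (-N) N := by
    intro j hj
    simp only [Finset.mem_insert, Finset.mem_singleton] at hj
    rcases hj with rfl | rfl <;> rw [Finset.mem_Icc] <;> omega
  have hzero : ∀ j ∈ Finset.Icc (-N) N, j ∉ ({m, m+1} : Finset ℤ) → hatFn δ j s = 0 := by
    intro j _ hj
    simp only [Finset.mem_insert, Finset.mem_singleton] at hj
    push_neg at hj
    have hcase : j ≤ m - 1 ∨ m + 2 ≤ j := by omega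
    have hdist : 1 ≤ |u - j| := by
      rcases hcase with hc | hc
      · have : (j : ℝ) ≤ (m : ℝ) - 1 := by exact_mod_cast hc
        rw [abs_of_nonneg (by linarith)]
        linarith
      · have : (m : ℝ) + 2 ≤ (j : ℝ) := by exact_mod_cast hc
        rw [abs_of_nonpos (by linarith)]
        linarith
    unfold hatFn
    rw [← hu]
    exact max_eq_left (by linarith)
  rw [← Finset.sum_subset hsub hzero]
  rw [Finset.sum_insert (by simp), Finset.sum_singleton]
  have v1 : hatFn δ m s = 1 - (u - m) := by
    unfold hatFn
    rw [← hu, abs_of_nonneg (by linarith)]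
    exact max_eq_right (by linarith)
  have v2 : hatFn δ (m+1) s = u - m := by
    unfold hatFn
    rw [← hu]
    push_cast
    rw [abs_of_nonpos (by linarith)]
    have h7 : 1 - -(u - ((m:ℝ) + 1)) = u - m := by ring
    rw [h7]
    exact max_eq_right (by linarith)
  rw [v1, v2]
  ring

/-! Generic sum manipulation lemmas. -/

lemma sum_mul_sum_expand {ι κ A : Type*} [NonUnitalNonAssocRing A] (S : Finset ι) (T : Finset κ)
    (X : ι → A) (Y : κ → A) (b : A) :
    (∑ r ∈ S, X r) * b * (∑ s ∈ T, Y s) = ∑ r ∈ S, ∑ s ∈ T, X r * b * Y s := by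
  rw [Finset.sum_mul, Finset.sum_mul]
  exact Finset.sum_congr rfl fun p _ => by rw [Finset.mul_sum]

lemma sum_mul_sum_diag {ι A : Type*} [NonUnitalNonAssocRing A] (K : Finset ι)
    (u v : ι → A) (b : A)
    (hcross : ∀ p ∈ K, ∀ q ∈ K, p ≠ q → u p * b * v q = 0) :
    (∑ p ∈ K, u p) * b * (∑ q ∈ K, v q) = ∑ p ∈ K, u p * b * v p := by
  classical
  rw [sum_mul_sum_expand]
  exact Finset.sum_congr rfl fun p hp =>
    Finset.sum_eq_single_of_mem p hp fun q hq hqp => hcross p hp q hq (Ne.symm hqp)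

lemma two_le_abs_of_natAbs {x : ℤ} (h : 2 ≤ x.natAbs) : 2 ≤ |x| := by
  rw [Int.abs_eq_natAbs]; exact_mod_cast h

lemma abs_sum_le_single {ι : Type*} (K : Finset ι) (g : ι → ℝ) {C : ℝ} (hC : 0 ≤ C)
    (hb : ∀ p ∈ K, |g p| ≤ C)
    (hd : ∀ p ∈ K, ∀ q ∈ K, p ≠ q → g p = 0 ∨ g q = 0) : |∑ p ∈ K, g p| ≤ C := by
  classical
  by_cases hex : ∃ p ∈ K, g p ≠ 0
  · obtain ⟨p₀, hp₀, hgp₀⟩ := hex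
    rw [Finset.sum_eq_single_of_mem p₀ hp₀ (fun q hq hne => by
      rcases hd q hq p₀ hp₀ hne with h' | h'
      · exact h'
      · exact absurd h' hgp₀)]
    exact hb p₀ hp₀
  · push_neg at hex
    rw [Finset.sum_eq_zero hex]
    simpa using hC

section CStarHelpers
variable {A : Type*} [CStarAlgebra A]

lemma norm_mul3_le (x c y : A) : ‖x * c * y‖ ≤ ‖x‖ * ‖c‖ * ‖y‖ :=
  le_trans (norm_mul_le _ _) (by
    have h1 := norm_mul_le x c
    nlinarith [norm_nonneg x, norm_nonneg c, norm_nonneg y, norm_nonneg (x * c)])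

lemma spec_zero_subset' : spectrum ℂ (0 : A) ⊆ {0} := by
  intro z hz
  by_contra hz0
  apply spectrum.notMem_iff.mpr ?_ hz
  simp only [sub_zero]
  exact (IsUnit.map (algebraMap ℂ A) (isUnit_iff_ne_zero.mpr hz0))

lemma eq_zero_of_forall_spec (z : A) (hz : ∀ y : A, spectrum ℂ (z * y) ⊆ {0}) : z = 0 := by
  have h1 : spectrum ℂ (z * star z) ⊆ {0} := hz (star z)
  have hsa : IsSelfAdjoint (z * star z) := IsSelfAdjoint.mul_star_self z
  have h2 : spectralRadius ℂ (z * star z) = 0 := by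
    rw [spectralRadius]
    refine le_antisymm ?_ zero_le
    refine iSup₂_le fun k hk => ?_
    have := h1 hk
    simp_all
  have h3 : (‖z * star z‖₊ : ENNReal) = 0 := by rw [← hsa.spectralRadius_eq_nnnorm, h2]
  have h4 : ‖z * star z‖ = 0 := by simpa using h3
  have h5 : ‖z‖ * ‖z‖ = 0 := by rw [← CStarRing.norm_self_mul_star]; exact h4
  have : ‖z‖ = 0 := by nlinarith [norm_nonneg z]
  simpa using this

lemma block_lemma {a b : A} (haa : IsSelfAdjoint a)
    (h : ∀ x : A, spectrum ℂ (a * x) = spectrum ℂ (b * x))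
    {f g : ℝ → ℝ} (hf : Continuous f) (hg : Continuous g)
    (hfg : ∀ s, s * f s * g s = 0) :
    cfc g a * b * cfc f a = 0 := by
  set F := cfc f a with hF
  set G := cfc g a with hG
  have hGaF : G * (a * F) = 0 := by
    rw [hF, hG]
    nth_rewrite 2 [← cfc_id ℝ a]
    rw [← cfc_mul _ _ a, ← cfc_mul _ _ a]
    calc cfc (fun s => g s * (id s * f s)) a = cfc (fun _ : ℝ => (0:ℝ)) a := by
          congr 1
          funext s
          simp only [id]
          linear_combination (hfg s)
       _ = 0 := by
          have he : (fun _ : ℝ => (0:ℝ)) = (0 : ℝ → ℝ) := rfl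
          rw [he, cfc_zero]
  apply eq_zero_of_forall_spec
  intro y
  have e1 : spectrum ℂ (G * (b * (F * y))) \ {0} = spectrum ℂ ((b * (F * y)) * G) \ {0} :=
    spectrum.nonzero_mul_comm _ _
  have e2 : (b * (F * y)) * G = b * (F * y * G) := by noncomm_ring
  have e3 : spectrum ℂ (b * (F * y * G)) = spectrum ℂ (a * (F * y * G)) := (h _).symm
  have e4 : a * (F * y * G) = (a * F) * (y * G) := by noncomm_ring
  have e5 : spectrum ℂ ((a * F) * (y * G)) \ {0} = spectrum ℂ ((y * G) * (a * F)) \ {0} :=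
    spectrum.nonzero_mul_comm _ _
  have e6 : (y * G) * (a * F) = y * (G * (a * F)) := by noncomm_ring
  have e7 : y * (G * (a * F)) = 0 := by rw [hGaF, mul_zero]
  intro t ht
  by_contra ht0
  have hmem : t ∈ spectrum ℂ (G * b * F * y) \ {0} := ⟨ht, ht0⟩
  have hassoc : G * b * F * y = G * (b * (F * y)) := by noncomm_ring
  rw [hassoc] at hmem
  rw [e1, e2, e3] at hmem
  rw [e4, e5, e6, e7] at hmem
  exact ht0 (spec_zero_subset' hmem.1)

end CStarHelpers

section MainEstimate
variable {A : Type*} [CStarAlgebra A] [Nontrivial A]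

lemma main_estimate {a b : A} (haa : IsSelfAdjoint a)
    (h : ∀ x : A, spectrum ℂ (a * x) = spectrum ℂ (b * x))
    {δ : ℝ} (hδ : 0 < δ) : ‖a * b - b * a‖ ≤ 27 * δ * ‖b‖ := by
  classical
  have hb0 : (0:ℝ) ≤ ‖b‖ := norm_nonneg b
  set M : ℝ := ‖a‖ with hM
  set N : ℤ := ⌈M / δ⌉ + 1 with hN
  set J : Finset ℤ := Finset.Icc (-N) N with hJ
  set ψ : ℤ → ℝ → ℝ := fun j => hatFn δ j with hψdef
  have hψc : ∀ j, Continuous (ψ j) := fun j => hat_cont δ j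
  have hspec : ∀ x ∈ spectrum ℝ a, |x| ≤ M := by
    intro x hx
    simpa using spectrum.norm_le_norm_of_mem hx
  -- the elements of the partition of unity
  set P : ℤ → A := fun j => cfc (ψ j) a with hPdef
  set Rl : ℝ → ℤ → A := fun c j => cfc (fun x => (x - c) * ψ j x) a with hRdef
  have hRc : ∀ (c : ℝ) (j : ℤ), Continuous (fun x => (x - c) * ψ j x) := by
    intro c j
    exact (continuous_id.sub continuous_const).mul (hψc j)
  -- block lemma instances
  have blk : ∀ (f g : ℝ → ℝ), Continuous f → Continuous g → (∀ s, s * f s * g s = 0) →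
      cfc g a * b * cfc f a = 0 := fun f g hf hg hfg => block_lemma haa h hf hg hfg
  have blk1 : ∀ (c : ℝ) (l j : ℤ), 2 ≤ |l - j| → Rl c l * b * P j = 0 := by
    intro c l j hlj
    refine blk (ψ j) (fun x => (x - c) * ψ l x) (hψc j) (hRc c l) fun x => ?_
    rcases hat_disj hδ hlj x with h0 | h0
    · show x * ψ j x * ((x - c) * ψ l x) = 0
      rw [show ψ l x = hatFn δ l x from rfl, h0]; ring
    · show x * ψ j x * ((x - c) * ψ l x) = 0
      rw [show ψ j x = hatFn δ j x from rfl, h0]; ring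
  have blk2 : ∀ (c : ℝ) (l j : ℤ), 2 ≤ |l - j| → P l * b * Rl c j = 0 := by
    intro c l j hlj
    refine blk (fun x => (x - c) * ψ j x) (ψ l) (hRc c j) (hψc l) fun x => ?_
    rcases hat_disj hδ hlj x with h0 | h0
    · show x * ((x - c) * ψ j x) * ψ l x = 0
      rw [show ψ l x = hatFn δ l x from rfl, h0]; ring
    · show x * ((x - c) * ψ j x) * ψ l x = 0
      rw [show ψ j x = hatFn δ j x from rfl, h0]; ring
  -- ∑ P = 1
  have hPsum : ∑ j ∈ J, P j = 1 := by
    rw [hPdef]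
    rw [← cfc_sum (fun j => ψ j) a J (fun i _ => (hψc i).continuousOn)]
    rw [cfc_congr (g := fun _ : ℝ => (1:ℝ)) (fun x hx => by
      have hx1 := hat_sum hδ (hspec x hx)
      rw [Finset.sum_apply]
      show ∑ j ∈ J, hatFn δ j x = 1
      rw [hJ, hN]
      exact hx1)]
    exact cfc_one ℝ a
  -- decomposition of a as a * P j pieces
  have haP : ∀ (c : ℝ) (l : ℤ), a * P l = Rl c l + c • P l := by
    intro c l
    rw [hPdef, hRdef]
    nth_rewrite 1 [← cfc_id ℝ a]
    rw [← cfc_mul _ _ a, ← cfc_smul c (ψ l) a, ← cfc_add a _ _]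
    exact cfc_congr fun x _ => by simp [id]; ring
  -- the per-pair identity
  have hpair : ∀ (l j : ℤ),
      a * P l * b * P j - P l * b * (a * P j)
        = Rl (δ * j) l * b * P j - P l * b * Rl (δ * j) j := by
    intro l j
    rw [haP (δ * j) l, haP (δ * j) j]
    rw [add_mul, add_mul, mul_add]
    rw [smul_mul_assoc, smul_mul_assoc, mul_smul_comm]
    abel
  -- residue classes
  set T : Finset ℤ := Finset.Icc 0 2 with hT
  set Jf : ℤ → Finset ℤ := fun r => J.filter (fun j => j % 3 = r) with hJf
  set Y : ℤ → A := fun r => ∑ j ∈ Jf r, P j with hY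
  have hfiber : ∀ (v : ℤ → A), ∑ r ∈ T, ∑ j ∈ Jf r, v j = ∑ j ∈ J, v j := by
    intro v
    rw [hJf, hT]
    exact Finset.sum_fiberwise_of_maps_to (fun j _ => by
      rw [Finset.mem_Icc]
      exact ⟨Int.emod_nonneg j (by norm_num), by
        have := Int.emod_lt_of_pos j (show (0:ℤ) < 3 by norm_num); omega⟩) v
  have hY1 : ∑ r ∈ T, Y r = 1 := by rw [hY]; rw [hfiber P]; exact hPsum
  -- the big decomposition
  have hdecomp : a * b - b * a
      = ∑ r ∈ T, ∑ s ∈ T, (a * Y r * b * Y s - Y r * b * (a * Y s)) := by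
    have hsumaY : ∑ r ∈ T, a * Y r = a := by
      rw [← Finset.mul_sum, hY1, mul_one]
    have e1 : ∑ r ∈ T, ∑ s ∈ T, a * Y r * b * Y s = a * b := by
      calc ∑ r ∈ T, ∑ s ∈ T, a * Y r * b * Y s
          = (∑ r ∈ T, a * Y r) * b * (∑ s ∈ T, Y s) :=
            (sum_mul_sum_expand T T (fun r => a * Y r) Y b).symm
        _ = a * b := by rw [hsumaY, hY1, mul_one]
    have e2 : ∑ r ∈ T, ∑ s ∈ T, Y r * b * (a * Y s) = b * a := by
      calc ∑ r ∈ T, ∑ s ∈ T, Y r * b * (a * Y s)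
          = (∑ r ∈ T, Y r) * b * (∑ s ∈ T, a * Y s) :=
            (sum_mul_sum_expand T T Y (fun s => a * Y s) b).symm
        _ = b * a := by rw [hsumaY, hY1, one_mul]
    rw [← e1, ← e2, ← Finset.sum_sub_distrib]
    exact Finset.sum_congr rfl fun r _ => (Finset.sum_sub_distrib _ _).symm
  -- the per-class bound
  have hkey : ∀ r ∈ T, ∀ s ∈ T, ‖a * Y r * b * Y s - Y r * b * (a * Y s)‖ ≤ 3 * δ * ‖b‖ := by
    intro r hr s hs
    set Kf : Finset (ℤ × ℤ) := (Jf r ×ˢ Jf s).filter (fun p => (p.1 - p.2).natAbs ≤ 1) with hKf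
    have hmemK : ∀ p ∈ Kf, p.1 % 3 = r ∧ p.2 % 3 = s ∧ (p.1 - p.2).natAbs ≤ 1 := by
      intro p hp
      rw [hKf, Finset.mem_filter, Finset.mem_product] at hp
      obtain ⟨⟨h1, h2⟩, h3⟩ := hp
      rw [hJf] at h1 h2
      simp only [Finset.mem_filter] at h1 h2
      exact ⟨h1.2, h2.2, h3⟩
    have hj_inj : ∀ p ∈ Kf, ∀ q ∈ Kf, p ≠ q → p.2 ≠ q.2 := by
      intro p hp q hq hpq hcon
      obtain ⟨hp1, hp2, hp3⟩ := hmemK p hp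
      obtain ⟨hq1, hq2, hq3⟩ := hmemK q hq
      apply hpq
      have h1 : p.1 = q.1 := by omega
      exact Prod.ext h1 hcon
    have hfar : ∀ p ∈ Kf, ∀ q ∈ Kf, p ≠ q →
        2 ≤ |p.1 - q.2| ∧ 2 ≤ |p.1 - q.1| ∧ 2 ≤ |p.2 - q.2| := by
      intro p hp q hq hpq
      obtain ⟨hp1, hp2, hp3⟩ := hmemK p hp
      obtain ⟨hq1, hq2, hq3⟩ := hmemK q hq
      have h2 := hj_inj p hp q hq hpq
      refine ⟨two_le_abs_of_natAbs ?_, two_le_abs_of_natAbs ?_, two_le_abs_of_natAbs ?_⟩ <;> omega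
    -- expand the product into a double sum over pairs
    have expand : a * Y r * b * Y s - Y r * b * (a * Y s)
        = ∑ p ∈ Jf r ×ˢ Jf s,
            (Rl (δ * p.2) p.1 * b * P p.2 - P p.1 * b * Rl (δ * p.2) p.2) := by
      have eA : a * Y r * b * Y s = ∑ l ∈ Jf r, ∑ j ∈ Jf s, a * P l * b * P j := by
        calc a * Y r * b * Y s
            = (∑ l ∈ Jf r, a * P l) * b * (∑ j ∈ Jf s, P j) := by
              simp only [hY, Finset.mul_sum]
          _ = ∑ l ∈ Jf r, ∑ j ∈ Jf s, a * P l * b * P j :=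
              sum_mul_sum_expand _ _ _ _ b
      have eB : Y r * b * (a * Y s) = ∑ l ∈ Jf r, ∑ j ∈ Jf s, P l * b * (a * P j) := by
        calc Y r * b * (a * Y s)
            = (∑ l ∈ Jf r, P l) * b * (∑ j ∈ Jf s, a * P j) := by
              simp only [hY, Finset.mul_sum]
          _ = ∑ l ∈ Jf r, ∑ j ∈ Jf s, P l * b * (a * P j) :=
              sum_mul_sum_expand _ _ _ _ b
      rw [eA, eB, ← Finset.sum_sub_distrib]
      rw [Finset.sum_product]
      refine Finset.sum_congr rfl fun l _ => ?_
      rw [← Finset.sum_sub_distrib]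
      exact Finset.sum_congr rfl fun j _ => hpair l j
    -- kill the far-apart pairs
    have hsubK : Kf ⊆ Jf r ×ˢ Jf s := Finset.filter_subset _ _
    have hvan : ∀ p ∈ Jf r ×ˢ Jf s, p ∉ Kf →
        Rl (δ * p.2) p.1 * b * P p.2 - P p.1 * b * Rl (δ * p.2) p.2 = 0 := by
      intro p hp hnot
      have habs : 2 ≤ |p.1 - p.2| := by
        rw [hKf, Finset.mem_filter] at hnot
        have h9 : ¬ (p.1 - p.2).natAbs ≤ 1 := fun hh => hnot ⟨hp, hh⟩
        exact two_le_abs_of_natAbs (by omega)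
      rw [blk1 _ _ _ habs, blk2 _ _ _ habs, sub_zero]
    have expand2 : a * Y r * b * Y s - Y r * b * (a * Y s)
        = (∑ p ∈ Kf, Rl (δ * p.2) p.1) * b * (∑ p ∈ Kf, P p.2)
          - (∑ p ∈ Kf, P p.1) * b * (∑ p ∈ Kf, Rl (δ * p.2) p.2) := by
      rw [expand, ← Finset.sum_subset hsubK hvan, Finset.sum_sub_distrib]
      congr 1
      · exact (sum_mul_sum_diag Kf _ _ b
          (fun p hp q hq hpq => blk1 _ _ _ (hfar p hp q hq hpq).1)).symm
      · exact (sum_mul_sum_diag Kf _ _ b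
          (fun p hp q hq hpq => blk2 _ _ _ (hfar p hp q hq hpq).1)).symm
    -- norm bounds for the four factors
    have castabs : ∀ p : ℤ × ℤ, (p.1 - p.2).natAbs ≤ 1 → |(p.1 : ℝ) - (p.2 : ℝ)| ≤ 1 := by
      intro p hp
      have h1 : |p.1 - p.2| ≤ 1 := by
        rw [Int.abs_eq_natAbs]; exact_mod_cast hp
      have h2 : ((|p.1 - p.2| : ℤ) : ℝ) ≤ 1 := by exact_mod_cast h1
      rw [Int.cast_abs] at h2
      push_cast at h2
      exact h2
    have nF : ‖∑ p ∈ Kf, Rl (δ * p.2) p.1‖ ≤ 2 * δ := by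
      simp only [hRdef]
      rw [← cfc_sum _ a Kf (fun p _ => (hRc (δ * p.2) p.1).continuousOn)]
      apply norm_cfc_le (by positivity)
      intro x hx
      rw [Finset.sum_apply, Real.norm_eq_abs]
      refine abs_sum_le_single Kf _ (by positivity) ?_ ?_
      · intro p hp
        by_cases h0 : ψ p.1 x = 0
        · rw [h0, mul_zero, abs_zero]; positivity
        · have hx1 : |x - δ * p.1| < δ := hat_ne_zero hδ h0
          have hd : |(p.1 : ℝ) - (p.2 : ℝ)| ≤ 1 := castabs p (hmemK p hp).2.2
          have hx2 : |x - δ * p.2| ≤ 2 * δ := by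
            have h4 : |x - δ * p.2| ≤ |x - δ * p.1| + |δ * p.1 - δ * p.2| :=
              abs_sub_le _ _ _
            have h5 : |δ * (p.1:ℝ) - δ * p.2| = δ * |(p.1:ℝ) - p.2| := by
              rw [show δ * (p.1:ℝ) - δ * p.2 = δ * ((p.1:ℝ) - p.2) by ring, abs_mul,
                abs_of_pos hδ]
            nlinarith
          rw [abs_mul]
          have h6 : |ψ p.1 x| ≤ 1 := by
            rw [abs_of_nonneg (hat_nonneg δ p.1 x)]
            exact hat_le_one δ p.1 x
          nlinarith [abs_nonneg (x - δ * (p.2:ℝ)), abs_nonneg (ψ p.1 x)]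
      · intro p hp q hq hpq
        rcases hat_disj hδ (hfar p hp q hq hpq).2.1 x with h0 | h0
        · left; rw [show ψ p.1 x = hatFn δ p.1 x from rfl, h0, mul_zero]
        · right; rw [show ψ q.1 x = hatFn δ q.1 x from rfl, h0, mul_zero]
    have nG : ‖∑ p ∈ Kf, P p.2‖ ≤ 1 := by
      simp only [hPdef]
      rw [← cfc_sum _ a Kf (fun p _ => (hψc p.2).continuousOn)]
      apply norm_cfc_le (by norm_num)
      intro x hx
      rw [Finset.sum_apply, Real.norm_eq_abs]
      refine abs_sum_le_single Kf _ (by norm_num) ?_ ?_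
      · intro p hp
        rw [abs_of_nonneg (hat_nonneg δ p.2 x)]
        exact hat_le_one δ p.2 x
      · intro p hp q hq hpq
        rcases hat_disj hδ (hfar p hp q hq hpq).2.2 x with h0 | h0
        · left; exact h0
        · right; exact h0
    have nG' : ‖∑ p ∈ Kf, P p.1‖ ≤ 1 := by
      simp only [hPdef]
      rw [← cfc_sum _ a Kf (fun p _ => (hψc p.1).continuousOn)]
      apply norm_cfc_le (by norm_num)
      intro x hx
      rw [Finset.sum_apply, Real.norm_eq_abs]
      refine abs_sum_le_single Kf _ (by norm_num) ?_ ?_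
      · intro p hp
        rw [abs_of_nonneg (hat_nonneg δ p.1 x)]
        exact hat_le_one δ p.1 x
      · intro p hp q hq hpq
        rcases hat_disj hδ (hfar p hp q hq hpq).2.1 x with h0 | h0
        · left; exact h0
        · right; exact h0
    have nF' : ‖∑ p ∈ Kf, Rl (δ * p.2) p.2‖ ≤ δ := by
      simp only [hRdef]
      rw [← cfc_sum _ a Kf (fun p _ => (hRc (δ * p.2) p.2).continuousOn)]
      apply norm_cfc_le (le_of_lt hδ)
      intro x hx
      rw [Finset.sum_apply, Real.norm_eq_abs]
      refine abs_sum_le_single Kf _ (le_of_lt hδ) ?_ ?_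
      · intro p hp
        by_cases h0 : ψ p.2 x = 0
        · rw [h0, mul_zero, abs_zero]; positivity
        · have hx1 : |x - δ * p.2| < δ := hat_ne_zero hδ h0
          rw [abs_mul]
          have h6 : |ψ p.2 x| ≤ 1 := by
            rw [abs_of_nonneg (hat_nonneg δ p.2 x)]
            exact hat_le_one δ p.2 x
          nlinarith [abs_nonneg (x - δ * (p.2:ℝ)), abs_nonneg (ψ p.2 x)]
      · intro p hp q hq hpq
        rcases hat_disj hδ (hfar p hp q hq hpq).2.2 x with h0 | h0
        · left; rw [show ψ p.2 x = hatFn δ p.2 x from rfl, h0, mul_zero]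
        · right; rw [show ψ q.2 x = hatFn δ q.2 x from rfl, h0, mul_zero]
    -- put the bounds together
    rw [expand2]
    have m1 := norm_mul3_le (∑ p ∈ Kf, Rl (δ * p.2) p.1) b (∑ p ∈ Kf, P p.2)
    have m2 := norm_mul3_le (∑ p ∈ Kf, P p.1) b (∑ p ∈ Kf, Rl (δ * p.2) p.2)
    have tri := norm_sub_le ((∑ p ∈ Kf, Rl (δ * p.2) p.1) * b * (∑ p ∈ Kf, P p.2))
      ((∑ p ∈ Kf, P p.1) * b * (∑ p ∈ Kf, Rl (δ * p.2) p.2))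
    have u1 : ‖(∑ p ∈ Kf, Rl (δ * p.2) p.1) * b * (∑ p ∈ Kf, P p.2)‖ ≤ 2 * δ * ‖b‖ := by
      refine le_trans m1 ?_
      have h2 : ‖∑ p ∈ Kf, Rl (δ * p.2) p.1‖ * ‖b‖ * ‖∑ p ∈ Kf, P p.2‖
          ≤ ‖∑ p ∈ Kf, Rl (δ * p.2) p.1‖ * ‖b‖ * 1 :=
        mul_le_mul_of_nonneg_left nG (by positivity)
      have h1 : ‖∑ p ∈ Kf, Rl (δ * p.2) p.1‖ * ‖b‖ ≤ (2 * δ) * ‖b‖ :=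
        mul_le_mul_of_nonneg_right nF hb0
      calc ‖∑ p ∈ Kf, Rl (δ * p.2) p.1‖ * ‖b‖ * ‖∑ p ∈ Kf, P p.2‖
          ≤ ‖∑ p ∈ Kf, Rl (δ * p.2) p.1‖ * ‖b‖ * 1 := h2
        _ = ‖∑ p ∈ Kf, Rl (δ * p.2) p.1‖ * ‖b‖ := by ring
        _ ≤ 2 * δ * ‖b‖ := h1
    have u2 : ‖(∑ p ∈ Kf, P p.1) * b * (∑ p ∈ Kf, Rl (δ * p.2) p.2)‖ ≤ δ * ‖b‖ := by
      refine le_trans m2 ?_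
      have h3 : ‖∑ p ∈ Kf, P p.1‖ * ‖b‖ * ‖∑ p ∈ Kf, Rl (δ * p.2) p.2‖
          ≤ ‖∑ p ∈ Kf, P p.1‖ * ‖b‖ * δ :=
        mul_le_mul_of_nonneg_left nF' (by positivity)
      have h4 : ‖∑ p ∈ Kf, P p.1‖ * ‖b‖ * δ ≤ 1 * ‖b‖ * δ := by
        have := mul_le_mul_of_nonneg_right nG' hb0
        exact mul_le_mul_of_nonneg_right this hδ.le
      calc ‖∑ p ∈ Kf, P p.1‖ * ‖b‖ * ‖∑ p ∈ Kf, Rl (δ * p.2) p.2‖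
          ≤ ‖∑ p ∈ Kf, P p.1‖ * ‖b‖ * δ := h3
        _ ≤ 1 * ‖b‖ * δ := h4
        _ = δ * ‖b‖ := by ring
    linarith [tri, u1, u2]
  -- conclusion
  rw [hdecomp]
  have hT3 : (T.card : ℝ) = 3 := by
    have : T.card = 3 := by rw [hT]; decide
    rw [this]; norm_num
  calc ‖∑ r ∈ T, ∑ s ∈ T, (a * Y r * b * Y s - Y r * b * (a * Y s))‖
      ≤ ∑ r ∈ T, ‖∑ s ∈ T, (a * Y r * b * Y s - Y r * b * (a * Y s))‖ := norm_sum_le _ _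
    _ ≤ ∑ r ∈ T, ∑ s ∈ T, ‖a * Y r * b * Y s - Y r * b * (a * Y s)‖ :=
        Finset.sum_le_sum fun r _ => norm_sum_le _ _
    _ ≤ ∑ r ∈ T, ∑ s ∈ T, (3 * δ * ‖b‖) :=
        Finset.sum_le_sum fun r hr => Finset.sum_le_sum fun s hs => hkey r hr s hs
    _ = 27 * δ * ‖b‖ := by
        rw [Finset.sum_const, Finset.sum_const, nsmul_eq_mul, nsmul_eq_mul]
        rw [← mul_assoc]
        rw [show ((T.card : ℝ) * (T.card : ℝ)) = 9 by rw [hT3]; norm_num]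
        ring
end MainEstimate


/-- Theorem 2.6, Claim 2: In a unital C*-algebra, if `σ(a x) = σ(b x)` for all
`x` and `a` is self-adjoint, then `a` and `b` commute. -/
theorem commute_of_spectrum_mul_eq
    {A : Type*} [NormedRing A] [StarRing A] [CStarRing A] [CompleteSpace A]
    [NormedAlgebra ℂ A] [StarModule ℂ A]
    (a b : A)
    (h : ∀ x : A, spectrum ℂ (a * x) = spectrum ℂ (b * x))
    (ha : a = star a) :
    a * b = b * a := by
  letI : CStarAlgebra A := { }
  obtain hsub | hnt := subsingleton_or_nontrivial A
  · exact Subsingleton.elim _ _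
  have haa : IsSelfAdjoint a := ha.symm
  have key : ∀ δ : ℝ, 0 < δ → ‖a * b - b * a‖ ≤ 27 * δ * ‖b‖ :=
    fun δ hδ => main_estimate haa h hδ
  have hz : ‖a * b - b * a‖ ≤ 0 := by
    refine le_of_forall_pos_le_add fun ε hε => ?_
    rw [zero_add]
    have hδ : 0 < ε / (27 * (‖b‖ + 1)) := by positivity
    refine le_trans (key _ hδ) ?_
    have h0 : 27 * (ε / (27 * (‖b‖ + 1))) * ‖b‖ = (27 * ε * ‖b‖) / (27 * (‖b‖ + 1)) := by
      ring
    rw [h0, div_le_iff₀ (by positivity)]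
    nlinarith [norm_nonneg b, hε.le]
  have hzero : a * b - b * a = 0 := norm_le_zero_iff.mp hz
  exact sub_eq_zero.mp hzero
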